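/- arXiv:2405.04730 — 5 statements merged into one kernel-verified Lean document; each statement's English description precedes it below -/
import Mathlib

section
/- Let v be a C² function on an interval [s₀, s₁] satisfying v''(s) + c²(1 + q(s)) v(s) = f(s), where c > 0, q is a C¹ function with |q(s)| ≤ 1/2 on [s₀,s₁], and f is continuous. Then there is a universal constant C such that for all s ∈ [s₀,s₁]: |v'(s)| + c|v(s)| ≤ C(1+c)(1+c^{-1}) ( |v'(s₀)| + c|v(s₀)| ) + C(1+c) c^{-1} ∫_{s₀}^{s} ( |f(σ)| + |q'(σ) v'(σ)| ) dσ. -/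
open Set


lemma osc_sqrt_add_le (x y : ℝ) (hx : 0 ≤ x) (hy : 0 ≤ y) :
    Real.sqrt (x+y) ≤ Real.sqrt x + Real.sqrt y := by
  have h1 : x + y ≤ (Real.sqrt x + Real.sqrt y)^2 := by
    nlinarith [Real.sq_sqrt hx, Real.sq_sqrt hy,
      mul_nonneg (Real.sqrt_nonneg x) (Real.sqrt_nonneg y)]
  calc Real.sqrt (x+y) ≤ Real.sqrt ((Real.sqrt x + Real.sqrt y)^2) := Real.sqrt_le_sqrt h1
    _ = _ := Real.sqrt_sq (by positivity)

lemma osc_aux (c P a F Q r : ℝ) (hc : 0 < c) (hP : c^2/2 ≤ P) (hr : 0 < r)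
    (ha : a^2 ≤ P * r^2) :
    (2*a*F/P - a^2*(c^2*Q)/P^2) / (2*r) ≤ Real.sqrt 2 / c * (|F| + |Q*a|) := by
  have hP0 : 0 < P := by nlinarith
  set G := |F| with hG
  set W := |Q*a| with hW
  have hG0 : 0 ≤ G := abs_nonneg _
  have hW0 : 0 ≤ W := abs_nonneg _
  set m := Real.sqrt P with hm_def
  have hm0 : 0 < m := Real.sqrt_pos.mpr hP0
  have hm : m^2 = P := Real.sq_sqrt hP0.le
  set s2 := Real.sqrt 2 with hs2_def
  have hs20 : 0 < s2 := Real.sqrt_pos.mpr (by norm_num)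
  have hs2 : s2^2 = 2 := Real.sq_sqrt (by norm_num)
  have hcm : c ≤ s2 * m := by nlinarith [sq_nonneg (s2*m - c), mul_pos hs20 hm0]
  have ham : |a| ≤ m * r := by
    have h := Real.sqrt_le_sqrt (show a^2 ≤ (m*r)^2 by nlinarith)
    rwa [Real.sqrt_sq_eq_abs, Real.sqrt_sq (by positivity)] at h
  have haf : a * F ≤ m * r * G := by
    calc a * F ≤ |a * F| := le_abs_self _
      _ = |a| * G := abs_mul _ _
      _ ≤ m * r * G := mul_le_mul_of_nonneg_right ham hG0
  have t1 : 2*(a*F)/P ≤ 2*r*(s2*G)/c := by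
    rw [div_le_div_iff₀ hP0 hc]
    have e0 : 2*r*(s2*G)*P = 2*(m*r*G)*(s2*m) := by rw [← hm]; ring
    nlinarith [mul_le_mul_of_nonneg_right haf hc.le,
      mul_le_mul_of_nonneg_left hcm (by positivity : (0:ℝ) ≤ 2*(m*r*G))]
  have h1 : -(a^2*Q) ≤ m*r*W := by
    calc -(a^2*Q) ≤ |a^2*Q| := neg_le_abs _
      _ = |a| * W := by rw [hW, abs_mul, abs_mul, abs_pow]; ring
      _ ≤ m*r*W := mul_le_mul_of_nonneg_right ham hW0
  have hc3 : c^3 ≤ 2*s2*m^3 := by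
    calc c^3 ≤ (s2*m)^3 := pow_le_pow_left₀ hc.le hcm 3
      _ = s2^2 * (s2 * m^3) := by ring
      _ = 2*s2*m^3 := by rw [hs2]; ring
  have t2 : -(a^2*(c^2*Q))/P^2 ≤ 2*r*(s2*W)/c := by
    rw [div_le_div_iff₀ (by positivity) hc]
    have e0 : 2*r*(s2*W)*P^2 = (m*r*W)*(2*s2*m^3) := by rw [← hm]; ring
    nlinarith [mul_le_mul_of_nonneg_right h1 (by positivity : (0:ℝ) ≤ c^3),
      mul_le_mul_of_nonneg_left hc3 (by positivity : (0:ℝ) ≤ m*r*W)]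
  have h2r : (0:ℝ) < 2*r := by linarith
  rw [div_le_iff₀ h2r]
  have e : s2/c*(G+W)*(2*r) = 2*r*(s2*G)/c + 2*r*(s2*W)/c := by
    field_simp
  have e2 : 2*a*F/P - a^2*(c^2*Q)/P^2 = 2*(a*F)/P + (-(a^2*(c^2*Q))/P^2) := by ring
  rw [e, e2]
  exact add_le_add t1 t2

lemma osc_L2 (x y c P Eε : ℝ) (hc : 0 < c) (hP0 : 0 < P) (hPub : P ≤ 3*c^2/2)
    (hxE : x^2/P + y^2 ≤ Eε) : (|x| + c*|y|)^2 ≤ 2^2*c^2*Eε := by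
  have hX0 : 0 ≤ x^2/P := div_nonneg (sq_nonneg _) hP0.le
  have hXe : (x^2/P)*P = x^2 := div_mul_cancel₀ _ hP0.ne'
  have hEε0 : 0 ≤ Eε := le_trans (by positivity) hxE
  nlinarith [sq_abs x, sq_abs y, sq_nonneg (|x| - c*|y|),
    mul_le_mul_of_nonneg_right hPub hX0, mul_nonneg (sq_nonneg c) hEε0, sq_nonneg c,
    sq_nonneg y, mul_le_mul_of_nonneg_left hxE (sq_nonneg c)]

lemma osc_E0 (x y c P : ℝ) (hc : 0 < c) (hPlb : c^2/2 ≤ P) (hP0 : 0 < P) :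
    x^2/P + y^2 ≤ 2*(|x|+c*|y|)^2/c^2 := by
  have hX0 : 0 ≤ x^2/P := div_nonneg (sq_nonneg _) hP0.le
  have hXe : (x^2/P)*P = x^2 := div_mul_cancel₀ _ hP0.ne'
  rw [le_div_iff₀ (by positivity : (0:ℝ) < c^2)]
  nlinarith [mul_le_mul_of_nonneg_left hPlb hX0, sq_abs x, sq_abs y,
    mul_nonneg (mul_nonneg hc.le (abs_nonneg x)) (abs_nonneg y), sq_nonneg c]

lemma osc_coef (c A B : ℝ) (hc : 0 < c) (hA : 0 ≤ A) (hB : 0 ≤ B) :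
    3*A + 3*B ≤ 3*(1+c)*(1+c⁻¹)*A + 3*(1+c)*c⁻¹*B := by
  have hci : 0 < c⁻¹ := inv_pos.mpr hc
  have e3 : 3*(1+c)*(1+c⁻¹)*A = 3*A*(2+c+c⁻¹) := by field_simp; ring
  have e4 : 3*(1+c)*c⁻¹*B = 3*B*(1+c⁻¹) := by field_simp; ring
  nlinarith [mul_nonneg hA hc.le, mul_nonneg hA hci.le, mul_nonneg hB hci.le]

set_option maxHeartbeats 1000000 in
/-- perturbed harmonic oscillator estimate. If `v'' + c²(1+q)v = f`
on `[s₀,s₁]` with `c > 0`, `|q| ≤ 1/2`, then for a universal constant `C`,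
`|v'(s)| + c|v(s)| ≤ C(1+c)(1+c⁻¹)(|v'(s₀)| + c|v(s₀)|)
  + C(1+c)c⁻¹ ∫_{s₀}^s (|f| + |q' v'|)`. -/
theorem ode_oscillator_estimate :
    ∃ C : ℝ, 0 < C ∧
      ∀ (s₀ s₁ c : ℝ) (v v' v'' q q' f : ℝ → ℝ),
        s₀ ≤ s₁ → 0 < c →
        (∀ s ∈ Icc s₀ s₁, HasDerivAt v (v' s) s) →
        (∀ s ∈ Icc s₀ s₁, HasDerivAt v' (v'' s) s) →
        ContinuousOn v'' (Icc s₀ s₁) →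
        (∀ s ∈ Icc s₀ s₁, HasDerivAt q (q' s) s) →
        ContinuousOn q' (Icc s₀ s₁) →
        (∀ s ∈ Icc s₀ s₁, |q s| ≤ 1 / 2) →
        ContinuousOn f (Icc s₀ s₁) →
        (∀ s ∈ Icc s₀ s₁, v'' s + c ^ 2 * (1 + q s) * v s = f s) →
        ∀ s ∈ Icc s₀ s₁,
          |v' s| + c * |v s| ≤
            C * (1 + c) * (1 + c⁻¹) * (|v' s₀| + c * |v s₀|) +
              C * (1 + c) * c⁻¹ * ∫ σ in s₀..s, (|f σ| + |q' σ * v' σ|) := by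
  refine ⟨3, by norm_num, ?_⟩
  intro s₀ s₁ c v v' v'' q q' f hs01 hc hdv hdv' hcv'' hdq hcq' hqle hcf hode s hs
  set I := Icc s₀ s₁ with hI
  set p : ℝ → ℝ := fun x => c^2*(1+q x) with hp_def
  set E : ℝ → ℝ := fun x => (v' x)^2 / p x + (v x)^2 with hE_def
  set D : ℝ → ℝ := fun x => 2*(v' x)*(f x)/(p x) - (v' x)^2*(c^2*(q' x))/(p x)^2 with hD_def
  have hs₀I : s₀ ∈ I := ⟨le_refl _, hs01⟩
  have hp_lb : ∀ x ∈ I, c^2/2 ≤ p x := fun x hx => by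
    have h := abs_le.mp (hqle x hx); simp only [hp_def]; nlinarith [sq_nonneg c]
  have hp_ub : ∀ x ∈ I, p x ≤ 3*c^2/2 := fun x hx => by
    have h := abs_le.mp (hqle x hx); simp only [hp_def]; nlinarith [sq_nonneg c]
  have hp0 : ∀ x ∈ I, 0 < p x := fun x hx =>
    lt_of_lt_of_le (by positivity) (hp_lb x hx)
  have hcv : ContinuousOn v I := fun x hx => (hdv x hx).continuousAt.continuousWithinAt
  have hcv' : ContinuousOn v' I := fun x hx => (hdv' x hx).continuousAt.continuousWithinAt
  have hcq : ContinuousOn q I := fun x hx => (hdq x hx).continuousAt.continuousWithinAt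
  have hcp : ContinuousOn p I := continuousOn_const.mul (continuousOn_const.add hcq)
  have hpne : ∀ x ∈ I, p x ≠ 0 := fun x hx => (hp0 x hx).ne'
  have hdE : ∀ x ∈ I, HasDerivAt E (D x) x := by
    intro x hx
    have hpx := hpne x hx
    have hdp : HasDerivAt p (c^2 * q' x) x := by
      have h := ((hdq x hx).const_add 1).const_mul (c^2)
      simpa [hp_def] using h
    have h1 := (hdv' x hx).pow 2
    have h2 := h1.div hdp hpx
    have h3 := (hdv x hx).pow 2
    have h4 := h2.add h3
    refine h4.congr_deriv ?_
    symm
    have hodex : v'' x = f x - p x * v x := by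
      have h := hode x hx; simp only [hp_def]; linarith
    simp only [hD_def]
    norm_num
    rw [hodex]
    field_simp
    ring
  have hcE : ContinuousOn E I := ((hcv'.pow 2).div hcp hpne).add (hcv.pow 2)
  have hcD : ContinuousOn D I :=
    (((continuousOn_const.mul hcv').mul hcf).div hcp hpne).sub
      (((hcv'.pow 2).mul (continuousOn_const.mul hcq')).div (hcp.pow 2)
        (fun x hx => pow_ne_zero _ (hpne x hx)))
  have hsubI : Icc s₀ s ⊆ I := Icc_subset_Icc le_rfl hs.2
  have huIcc : uIcc s₀ s = Icc s₀ s := uIcc_of_le hs.1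
  set A := |v' s₀| + c*|v s₀| with hA_def
  set B := (∫ σ in s₀..s, (|f σ| + |q' σ * v' σ|)) with hB_def
  have hA0 : 0 ≤ A := by positivity
  have hB0 : 0 ≤ B := intervalIntegral.integral_nonneg hs.1 (fun x hx => by positivity)
  have hg_cont : ContinuousOn (fun σ => Real.sqrt 2 / c * (|f σ| + |q' σ * v' σ|)) I :=
    continuousOn_const.mul (hcf.abs.add ((hcq'.mul hcv').abs))
  have key : ∀ ε : ℝ, 0 < ε →
      |v' s| + c*|v s| ≤ 3*A + 3*B + 2*c*Real.sqrt ε := by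
    intro ε hε
    have hEnn : ∀ x ∈ I, 0 ≤ E x := by
      intro x hx
      have h := hp0 x hx
      simp only [hE_def]
      positivity
    have hEε : ∀ x ∈ I, 0 < E x + ε := fun x hx => by linarith [hEnn x hx]
    have hdF : ∀ x ∈ I, HasDerivAt (fun y => Real.sqrt (E y + ε))
        (D x / (2*Real.sqrt (E x + ε))) x := fun x hx =>
      ((hdE x hx).add_const ε).sqrt (hEε x hx).ne'
    have hr2 : ∀ x ∈ I, (Real.sqrt (E x + ε))^2 = E x + ε := fun x hx =>
      Real.sq_sqrt (hEε x hx).le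
    have hsq : ∀ x ∈ I, (v' x)^2 ≤ p x * (Real.sqrt (E x+ε))^2 := by
      intro x hx
      rw [hr2 x hx]
      have h1 : (v' x)^2 / p x ≤ E x + ε := by
        simp only [hE_def]; nlinarith [sq_nonneg (v x)]
      calc (v' x)^2 = ((v' x)^2/p x) * p x := (div_mul_cancel₀ _ (hpne x hx)).symm
        _ ≤ (E x + ε) * p x := mul_le_mul_of_nonneg_right h1 (hp0 x hx).le
        _ = p x * (E x + ε) := mul_comm _ _
    have hDg : ∀ x ∈ I, D x / (2*Real.sqrt (E x+ε)) ≤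
        Real.sqrt 2 / c * (|f x| + |q' x * v' x|) := by
      intro x hx
      have h := osc_aux c (p x) (v' x) (f x) (q' x) (Real.sqrt (E x+ε)) hc (hp_lb x hx)
        (Real.sqrt_pos.mpr (hEε x hx)) (hsq x hx)
      simpa [hD_def] using h
    have hsqrt_ne : ∀ x ∈ I, 2*Real.sqrt (E x + ε) ≠ 0 := by
      intro x hx
      have h := Real.sqrt_pos.mpr (hEε x hx)
      exact (by linarith : (0:ℝ) < 2*Real.sqrt (E x+ε)).ne'
    have hcFd : ContinuousOn (fun x => D x / (2*Real.sqrt (E x + ε))) I :=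
      hcD.div (continuousOn_const.mul
        (Real.continuous_sqrt.comp_continuousOn (hcE.add continuousOn_const))) hsqrt_ne
    have hintFd : IntervalIntegrable (fun x => D x/(2*Real.sqrt (E x+ε)))
        MeasureTheory.volume s₀ s :=
      (hcFd.mono (by rw [huIcc]; exact hsubI)).intervalIntegrable
    have hintg : IntervalIntegrable (fun σ => Real.sqrt 2 / c * (|f σ| + |q' σ * v' σ|))
        MeasureTheory.volume s₀ s :=
      (hg_cont.mono (by rw [huIcc]; exact hsubI)).intervalIntegrable
    have hFTC : (∫ σ in s₀..s, D σ/(2*Real.sqrt (E σ+ε)))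
        = Real.sqrt (E s + ε) - Real.sqrt (E s₀ + ε) :=
      intervalIntegral.integral_eq_sub_of_hasDerivAt
        (fun x hx => hdF x (hsubI (huIcc ▸ hx))) hintFd
    have hmono := intervalIntegral.integral_mono_on hs.1 hintFd hintg
      (fun x hx => hDg x (hsubI hx))
    have hIg : (∫ σ in s₀..s, Real.sqrt 2 / c * (|f σ| + |q' σ * v' σ|))
        = Real.sqrt 2 / c * B := by
      rw [hB_def]
      exact intervalIntegral.integral_const_mul _ _
    have hFs : Real.sqrt (E s + ε) ≤ Real.sqrt (E s₀ + ε) + Real.sqrt 2/c * B := by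
      rw [hFTC, hIg] at hmono
      linarith
    have hL2 : |v' s| + c*|v s| ≤ 2*c*Real.sqrt (E s + ε) := by
      have hF2 := hr2 s hs
      have hEeq : E s = (v' s)^2/p s + (v s)^2 := rfl
      have hab : (|v' s| + c*|v s|)^2 ≤ (2*c*Real.sqrt (E s + ε))^2 := by
        rw [mul_pow, mul_pow, hF2]
        exact osc_L2 (v' s) (v s) c (p s) (E s + ε) hc (hp0 s hs) (hp_ub s hs)
          (by rw [← hEeq]; linarith)
      have h := Real.sqrt_le_sqrt hab
      rwa [Real.sqrt_sq (by positivity), Real.sqrt_sq (by positivity)] at h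
    have hE₀ : E s₀ ≤ 2*A^2/c^2 := by
      have hEeq : E s₀ = (v' s₀)^2/p s₀ + (v s₀)^2 := rfl
      rw [hEeq, hA_def]
      exact osc_E0 (v' s₀) (v s₀) c (p s₀) hc (hp_lb s₀ hs₀I) (hp0 s₀ hs₀I)
    have hFs₀ : Real.sqrt (E s₀ + ε) ≤ Real.sqrt 2 * A / c + Real.sqrt ε := by
      have h7 : 2*A^2/c^2 = (Real.sqrt 2 * A/c)^2 := by
        rw [div_pow, mul_pow, Real.sq_sqrt (by norm_num : (0:ℝ) ≤ 2)]
      calc Real.sqrt (E s₀ + ε) ≤ Real.sqrt (2*A^2/c^2 + ε) :=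
            Real.sqrt_le_sqrt (by linarith)
        _ ≤ Real.sqrt (2*A^2/c^2) + Real.sqrt ε :=
            osc_sqrt_add_le _ _ (by positivity) hε.le
        _ = Real.sqrt 2 * A/c + Real.sqrt ε := by
            rw [h7, Real.sqrt_sq (by positivity)]
    have hs2le : Real.sqrt 2 ≤ 3/2 := by
      have h := Real.sqrt_le_sqrt (by norm_num : (2:ℝ) ≤ (3/2)^2)
      rwa [Real.sqrt_sq (by norm_num : (0:ℝ) ≤ 3/2)] at h
    have hs2nn : 0 ≤ Real.sqrt 2 := Real.sqrt_nonneg 2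
    calc |v' s| + c*|v s| ≤ 2*c*Real.sqrt (E s + ε) := hL2
      _ ≤ 2*c*(Real.sqrt (E s₀ + ε) + Real.sqrt 2/c * B) :=
          mul_le_mul_of_nonneg_left hFs (by positivity)
      _ ≤ 2*c*((Real.sqrt 2 * A / c + Real.sqrt ε) + Real.sqrt 2/c * B) :=
          mul_le_mul_of_nonneg_left (by linarith) (by positivity)
      _ = 2*Real.sqrt 2*A + 2*Real.sqrt 2*B + 2*c*Real.sqrt ε := by
          field_simp; ring
      _ ≤ 3*A + 3*B + 2*c*Real.sqrt ε := by
          have hA' := mul_le_mul_of_nonneg_right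
            (by linarith : 2*Real.sqrt 2 ≤ 3) hA0
          have hB' := mul_le_mul_of_nonneg_right
            (by linarith : 2*Real.sqrt 2 ≤ 3) hB0
          linarith
  have hcoef := osc_coef c A B hc hA0 hB0
  refine le_of_forall_pos_le_add ?_
  intro δ hδ
  have hkey := key ((δ/(2*c))^2) (by positivity)
  rw [Real.sqrt_sq (by positivity)] at hkey
  have h2 : 2*c*(δ/(2*c)) = δ := by field_simp
  rw [h2] at hkey
  linarith
end

section
/- In ℝ^{1+n} with coordinates (t, x¹, …, xⁿ), for any C² function u the following pointwise identity holds: (K₁u + (n-1)u/2)·□u = (1/2) ∂_t( t Σ_{α=0}^n |∂_α u|² + 2 x^b ∂_b u ∂_t u + (n-1) u ∂_t u ) − (1/2) ∂_a( 2t ∂_t u ∂_a u + 2 x^b ∂_b u ∂_a u + x^a |∂_t u|² − x^a Σ_b |∂_b u|² + (n-1) u ∂_a u ), where K₁ = t∂_t + x^a ∂_a, □ = ∂_t² − Σ_a ∂_a², and repeated indices a, b ∈ {1,…,n} are summed. -/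
noncomputable section

/-- Partial derivative in the `i`-th coordinate direction on `ℝ^m`. -/
def pd {m : ℕ} (u : (Fin m → ℝ) → ℝ) (i : Fin m) (x : Fin m → ℝ) : ℝ :=
  fderiv ℝ u x (Pi.single i 1)

/-- D'Alembert operator `□ = ∂_t² − Σ_a ∂_a²` on `ℝ^{1+n}` (index `0` is time). -/
def Box {n : ℕ} (u : (Fin (n + 1) → ℝ) → ℝ) (p : Fin (n + 1) → ℝ) : ℝ :=
  pd (pd u 0) 0 p - ∑ a : Fin n, pd (pd u a.succ) a.succ p

/-- Scaling field `K₁u = t ∂_t u + x^a ∂_a u`. -/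
def K1 {n : ℕ} (u : (Fin (n + 1) → ℝ) → ℝ) (p : Fin (n + 1) → ℝ) : ℝ :=
  p 0 * pd u 0 p + ∑ a : Fin n, p a.succ * pd u a.succ p

/-! ### Auxiliary calculus for `pd` -/

lemma pd_add {m : ℕ} {f g : (Fin m → ℝ) → ℝ} {p : Fin m → ℝ}
    (hf : DifferentiableAt ℝ f p) (hg : DifferentiableAt ℝ g p) (i : Fin m) :
    pd (fun q => f q + g q) i p = pd f i p + pd g i p := by
  simp [pd, fderiv_fun_add hf hg]

lemma pd_sub {m : ℕ} {f g : (Fin m → ℝ) → ℝ} {p : Fin m → ℝ}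
    (hf : DifferentiableAt ℝ f p) (hg : DifferentiableAt ℝ g p) (i : Fin m) :
    pd (fun q => f q - g q) i p = pd f i p - pd g i p := by
  simp [pd, fderiv_fun_sub hf hg]

lemma pd_mul {m : ℕ} {f g : (Fin m → ℝ) → ℝ} {p : Fin m → ℝ}
    (hf : DifferentiableAt ℝ f p) (hg : DifferentiableAt ℝ g p) (i : Fin m) :
    pd (fun q => f q * g q) i p = f p * pd g i p + g p * pd f i p := by
  simp [pd, fderiv_fun_mul hf hg]

lemma pd_const_mul {m : ℕ} {f : (Fin m → ℝ) → ℝ} {p : Fin m → ℝ}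
    (hf : DifferentiableAt ℝ f p) (c : ℝ) (i : Fin m) :
    pd (fun q => c * f q) i p = c * pd f i p := by
  simp [pd, fderiv_const_mul hf c]

lemma pd_sum {m : ℕ} {ι : Type*} {s : Finset ι} {f : ι → (Fin m → ℝ) → ℝ} {p : Fin m → ℝ}
    (hf : ∀ j ∈ s, DifferentiableAt ℝ (f j) p) (i : Fin m) :
    pd (fun q => ∑ j ∈ s, f j q) i p = ∑ j ∈ s, pd (f j) i p := by
  simp [pd, fderiv_fun_sum hf]

lemma pd_sq {m : ℕ} {f : (Fin m → ℝ) → ℝ} {p : Fin m → ℝ}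
    (hf : DifferentiableAt ℝ f p) (i : Fin m) :
    pd (fun q => f q ^ 2) i p = 2 * f p * pd f i p := by
  have h : (fun q => f q ^ 2) = fun q => f q * f q := by ext q; ring
  rw [h, pd_mul hf hf]; ring

lemma pd_coord {m : ℕ} (j i : Fin m) (p : Fin m → ℝ) :
    pd (fun q => q j) i p = if i = j then 1 else 0 := by
  have h : (fun q : Fin m → ℝ => q j)
      = ⇑(ContinuousLinearMap.proj (R := ℝ) (φ := fun _ : Fin m => ℝ) j) := rfl
  rw [pd, h, ContinuousLinearMap.fderiv]
  simp [Pi.single_apply, eq_comm]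

lemma contDiff_pd {m : ℕ} {u : (Fin m → ℝ) → ℝ} (hu : ContDiff ℝ 2 u) (i : Fin m) :
    ContDiff ℝ 1 (pd u i) := by
  have h := hu.fderiv_right (m := 1) (by norm_num)
  exact h.clm_apply contDiff_const

lemma pd_comm {m : ℕ} {u : (Fin m → ℝ) → ℝ} (hu : ContDiff ℝ 2 u) (i j : Fin m)
    (p : Fin m → ℝ) : pd (pd u i) j p = pd (pd u j) i p := by
  have hsymm : IsSymmSndFDerivAt ℝ u p :=
    hu.contDiffAt.isSymmSndFDerivAt (n := 2) (by norm_num)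
  have key : ∀ v w : Fin m → ℝ,
      fderiv ℝ (fun x => fderiv ℝ u x v) p w = fderiv ℝ (fderiv ℝ u) p w v := by
    intro v w
    have hd : DifferentiableAt ℝ (fderiv ℝ u) p :=
      ((hu.fderiv_right (m := 1) (by norm_num)).differentiable (by norm_num)) p
    rw [fderiv_clm_apply hd (differentiableAt_const v)]
    simp
  show fderiv ℝ (fun x => fderiv ℝ u x (Pi.single i 1)) p (Pi.single j 1)
      = fderiv ℝ (fun x => fderiv ℝ u x (Pi.single j 1)) p (Pi.single i 1)
  rw [key, key, hsymm]

/-- the pointwise divergence identity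
`(K₁u + (n-1)u/2)·□u = (1/2)∂_t(...) − (1/2)∂_a(...)`. -/
theorem divergence_identity_conformal
    (n : ℕ) (hn : 1 ≤ n) (u : (Fin (n + 1) → ℝ) → ℝ) (hu : ContDiff ℝ 2 u)
    (p : Fin (n + 1) → ℝ) :
    (K1 u p + ((n : ℝ) - 1) * u p / 2) * Box u p =
      (1 / 2) * pd (fun q =>
          q 0 * ∑ α : Fin (n + 1), (pd u α q) ^ 2 +
            2 * (∑ b : Fin n, q b.succ * pd u b.succ q) * pd u 0 q +
            ((n : ℝ) - 1) * u q * pd u 0 q) 0 p -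
      (1 / 2) * ∑ a : Fin n, pd (fun q =>
          2 * q 0 * pd u 0 q * pd u a.succ q +
            2 * (∑ b : Fin n, q b.succ * pd u b.succ q) * pd u a.succ q +
            q a.succ * (pd u 0 q) ^ 2 -
            q a.succ * (∑ b : Fin n, (pd u b.succ q) ^ 2) +
            ((n : ℝ) - 1) * u q * pd u a.succ q) a.succ p := by
  have hud : Differentiable ℝ u := (hu.of_le (m := 1) (by norm_num)).differentiable (by norm_num)
  have hpdd : ∀ i, Differentiable ℝ (pd u i) := fun i =>
    (contDiff_pd hu i).differentiable (by norm_num)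
  have hsym : ∀ i j, pd (pd u i) j p = pd (pd u j) i p := fun i j => pd_comm hu i j p
  -- differentiability of basic blocks
  have dUp : DifferentiableAt ℝ u p := hud p
  have dq0 : DifferentiableAt ℝ (fun q : Fin (n + 1) → ℝ => q 0) p := by fun_prop
  have dXf : DifferentiableAt ℝ
      (fun q : Fin (n + 1) → ℝ => ∑ b : Fin n, q b.succ * pd u b.succ q) p := by fun_prop
  have d2X : DifferentiableAt ℝ
      (fun q : Fin (n + 1) → ℝ => 2 * ∑ b : Fin n, q b.succ * pd u b.succ q) p := by fun_prop
  have dS : DifferentiableAt ℝ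
      (fun q : Fin (n + 1) → ℝ => ∑ α : Fin (n + 1), (pd u α q) ^ 2) p := by fun_prop
  have dcu : DifferentiableAt ℝ (fun q => ((n : ℝ) - 1) * u q) p := by fun_prop
  -- derivative of the full gradient square
  have hS : ∀ i : Fin (n + 1),
      pd (fun q => ∑ α : Fin (n + 1), (pd u α q) ^ 2) i p
        = 2 * ∑ α : Fin (n + 1), pd u α p * pd (pd u α) i p := by
    intro i
    rw [pd_sum (f := fun (α : Fin (n + 1)) q => (pd u α q) ^ 2) (fun j _ => by fun_prop) i,
      Finset.mul_sum]
    exact Finset.sum_congr rfl fun α _ => by rw [pd_sq (hpdd α p) i]; ring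
  -- derivative of the spatial gradient square
  have hSsp : ∀ i : Fin (n + 1),
      pd (fun q => ∑ b : Fin n, (pd u b.succ q) ^ 2) i p
        = 2 * ∑ b : Fin n, pd u b.succ p * pd (pd u b.succ) i p := by
    intro i
    rw [pd_sum (f := fun (b : Fin n) q => (pd u b.succ q) ^ 2) (fun j _ => by fun_prop) i,
      Finset.mul_sum]
    exact Finset.sum_congr rfl fun b _ => by rw [pd_sq (hpdd b.succ p) i]; ring
  -- derivative of X q = Σ_b q^b ∂_b u
  have hX : ∀ i : Fin (n + 1),
      pd (fun q => ∑ b : Fin n, q b.succ * pd u b.succ q) i p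
        = ∑ b : Fin n, (p b.succ * pd (pd u b.succ) i p
            + pd u b.succ p * (if i = b.succ then 1 else 0)) := by
    intro i
    rw [pd_sum (f := fun (b : Fin n) q => q b.succ * pd u b.succ q) (fun j _ => by fun_prop) i]
    exact Finset.sum_congr rfl fun b _ => by
      rw [pd_mul (by fun_prop) (hpdd b.succ p) i, pd_coord]
  have hX0 : pd (fun q => ∑ b : Fin n, q b.succ * pd u b.succ q) 0 p
      = ∑ b : Fin n, p b.succ * pd (pd u b.succ) 0 p := by
    rw [hX 0]
    refine Finset.sum_congr rfl fun b _ => ?_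
    rw [if_neg (Ne.symm (Fin.succ_ne_zero b))]; ring
  have hXa : ∀ a : Fin n, pd (fun q => ∑ b : Fin n, q b.succ * pd u b.succ q) a.succ p
      = pd u a.succ p + ∑ b : Fin n, p b.succ * pd (pd u b.succ) a.succ p := by
    intro a
    rw [hX a.succ, Finset.sum_add_distrib, add_comm]
    congr 1
    simp [Fin.succ_inj, mul_ite]
  -- the time boundary term
  have hT : pd (fun q =>
          q 0 * ∑ α : Fin (n + 1), (pd u α q) ^ 2 +
            2 * (∑ b : Fin n, q b.succ * pd u b.succ q) * pd u 0 q +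
            ((n : ℝ) - 1) * u q * pd u 0 q) 0 p
      = (∑ α : Fin (n + 1), (pd u α p) ^ 2)
        + p 0 * (2 * ∑ α : Fin (n + 1), pd u α p * pd (pd u α) 0 p)
        + (2 * ∑ b : Fin n, p b.succ * pd u b.succ p) * pd (pd u 0) 0 p
        + pd u 0 p * (2 * ∑ b : Fin n, p b.succ * pd (pd u b.succ) 0 p)
        + ((n : ℝ) - 1) * u p * pd (pd u 0) 0 p
        + pd u 0 p * (((n : ℝ) - 1) * pd u 0 p) := by
    have d1 : DifferentiableAt ℝ
        (fun q : Fin (n + 1) → ℝ => q 0 * ∑ α : Fin (n + 1), (pd u α q) ^ 2) p := by fun_prop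
    have d2 : DifferentiableAt ℝ
        (fun q : Fin (n + 1) → ℝ =>
          2 * (∑ b : Fin n, q b.succ * pd u b.succ q) * pd u 0 q) p := by fun_prop
    have d3 : DifferentiableAt ℝ
        (fun q : Fin (n + 1) → ℝ => ((n : ℝ) - 1) * u q * pd u 0 q) p := by fun_prop
    rw [pd_add (d1.fun_add d2) d3 0, pd_add d1 d2 0, pd_mul dq0 dS 0, pd_mul d2X (hpdd 0 p) 0,
      pd_mul dcu (hpdd 0 p) 0, pd_const_mul dXf 2 0, pd_const_mul dUp ((n : ℝ) - 1) 0,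
      hS 0, hX0, pd_coord, if_pos rfl]
    ring
  -- the spatial boundary terms
  have hE : ∀ a : Fin n, pd (fun q =>
          2 * q 0 * pd u 0 q * pd u a.succ q +
            2 * (∑ b : Fin n, q b.succ * pd u b.succ q) * pd u a.succ q +
            q a.succ * (pd u 0 q) ^ 2 -
            q a.succ * (∑ b : Fin n, (pd u b.succ q) ^ 2) +
            ((n : ℝ) - 1) * u q * pd u a.succ q) a.succ p
      = (2 * p 0 * pd u 0 p) * pd (pd u a.succ) a.succ p
        + (2 * p 0) * (pd u a.succ p * pd (pd u 0) a.succ p)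
        + (2 * ∑ b : Fin n, p b.succ * pd u b.succ p) * pd (pd u a.succ) a.succ p
        + 2 * (pd u a.succ p) ^ 2
        + 2 * (pd u a.succ p * ∑ b : Fin n, p b.succ * pd (pd u b.succ) a.succ p)
        + (2 * pd u 0 p) * (p a.succ * pd (pd u 0) a.succ p)
        + (pd u 0 p) ^ 2
        - 2 * (p a.succ * ∑ b : Fin n, pd u b.succ p * pd (pd u b.succ) a.succ p)
        - (∑ b : Fin n, (pd u b.succ p) ^ 2)
        + (((n : ℝ) - 1) * u p) * pd (pd u a.succ) a.succ p
        + ((n : ℝ) - 1) * (pd u a.succ p) ^ 2 := by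
    intro a
    have dqa : DifferentiableAt ℝ (fun q : Fin (n + 1) → ℝ => q a.succ) p := by fun_prop
    have dA1ff : DifferentiableAt ℝ (fun q : Fin (n + 1) → ℝ => 2 * q 0) p := by fun_prop
    have dA1f : DifferentiableAt ℝ (fun q : Fin (n + 1) → ℝ => 2 * q 0 * pd u 0 q) p := by
      fun_prop
    have dsq0 : DifferentiableAt ℝ (fun q : Fin (n + 1) → ℝ => (pd u 0 q) ^ 2) p := by fun_prop
    have dSsp : DifferentiableAt ℝ
        (fun q : Fin (n + 1) → ℝ => ∑ b : Fin n, (pd u b.succ q) ^ 2) p := by fun_prop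
    have dA1 : DifferentiableAt ℝ
        (fun q : Fin (n + 1) → ℝ => 2 * q 0 * pd u 0 q * pd u a.succ q) p := by fun_prop
    have dA2 : DifferentiableAt ℝ
        (fun q : Fin (n + 1) → ℝ =>
          2 * (∑ b : Fin n, q b.succ * pd u b.succ q) * pd u a.succ q) p := by fun_prop
    have dA3 : DifferentiableAt ℝ
        (fun q : Fin (n + 1) → ℝ => q a.succ * (pd u 0 q) ^ 2) p := by fun_prop
    have dA4 : DifferentiableAt ℝ
        (fun q : Fin (n + 1) → ℝ => q a.succ * (∑ b : Fin n, (pd u b.succ q) ^ 2)) p := by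
      fun_prop
    have dA5 : DifferentiableAt ℝ
        (fun q : Fin (n + 1) → ℝ => ((n : ℝ) - 1) * u q * pd u a.succ q) p := by fun_prop
    have e1 : pd (fun q : Fin (n + 1) → ℝ => q 0) a.succ p = 0 := by
      rw [pd_coord, if_neg (Fin.succ_ne_zero a)]
    have e2 : pd (fun q : Fin (n + 1) → ℝ => q a.succ) a.succ p = 1 := by
      rw [pd_coord, if_pos rfl]
    rw [pd_add (((dA1.fun_add dA2).fun_add dA3).fun_sub dA4) dA5 a.succ,
      pd_sub ((dA1.fun_add dA2).fun_add dA3) dA4 a.succ, pd_add (dA1.fun_add dA2) dA3 a.succ,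
      pd_add dA1 dA2 a.succ,
      pd_mul dA1f (hpdd a.succ p) a.succ, pd_mul dA1ff (hpdd 0 p) a.succ,
      pd_const_mul dq0 2 a.succ,
      pd_mul d2X (hpdd a.succ p) a.succ, pd_const_mul dXf 2 a.succ, hXa a,
      pd_mul dqa dsq0 a.succ, pd_sq (hpdd 0 p) a.succ,
      pd_mul dqa dSsp a.succ, hSsp a.succ,
      pd_mul dcu (hpdd a.succ p) a.succ, pd_const_mul dUp ((n : ℝ) - 1) a.succ,
      e1, e2]
    ring
  -- assemble
  have hEsum := Finset.sum_congr rfl fun a (_ : a ∈ (Finset.univ : Finset (Fin n))) => hE a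
  have hre1 : (∑ a : Fin n, pd u a.succ p * pd (pd u a.succ) 0 p)
      = ∑ a : Fin n, pd u a.succ p * pd (pd u 0) a.succ p :=
    Finset.sum_congr rfl fun a _ => by rw [hsym a.succ 0]
  have hre2 : (∑ b : Fin n, p b.succ * pd (pd u b.succ) 0 p)
      = ∑ b : Fin n, p b.succ * pd (pd u 0) b.succ p :=
    Finset.sum_congr rfl fun b _ => by rw [hsym b.succ 0]
  have hM : (∑ a : Fin n, pd u a.succ p * ∑ b : Fin n, p b.succ * pd (pd u b.succ) a.succ p)
      = ∑ a : Fin n, p a.succ * ∑ b : Fin n, pd u b.succ p * pd (pd u b.succ) a.succ p := by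
    simp only [Finset.mul_sum]
    rw [Finset.sum_comm]
    refine Finset.sum_congr rfl fun a _ => Finset.sum_congr rfl fun b _ => ?_
    rw [hsym a.succ b.succ]; ring
  simp only [K1, Box]
  rw [hT, hEsum, Fin.sum_univ_succ (f := fun α => (pd u α p) ^ 2),
    Fin.sum_univ_succ (f := fun α => pd u α p * pd (pd u α) 0 p), hre1, hre2]
  simp only [Finset.sum_add_distrib, Finset.sum_sub_distrib, ← Finset.mul_sum,
    Finset.sum_const, Finset.card_univ, Fintype.card_fin, nsmul_eq_mul]
  rw [hM]
  ring
end
end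

section
/- For any C² function v defined in the cone {r < t} ⊂ ℝ^{1+3} and s = √(t²−r²), the following identity holds pointwise: ∂̄_s∂̄_s v + (2x^a/s) ∂̄_s ∂̄_a v + (3/s) ∂̄_s v = s^{-3/2} (∂̄_s + (x^a/s)∂̄_a)²(s^{3/2} v) − (x^a x^b/s²) ∂̄_a ∂̄_b v − (3x^a/s²) ∂̄_a v − (3/(4s²)) v, where ∂̄_s = (s/t)∂_t, ∂̄_a = (x^a/t)∂_t + ∂_a. -/
noncomputable section

/-- `s = √(t² − |x|²)` on `ℝ^{1+3}` (index `0` is time). -/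
def sfun (p : Fin 4 → ℝ) : ℝ :=
  Real.sqrt ((p 0) ^ 2 - ∑ a : Fin 3, (p a.succ) ^ 2)

/-- The frame field `∂̄_s = (s/t)∂_t` acting on functions of `(t,x)`. -/
def Ds (f : (Fin 4 → ℝ) → ℝ) (p : Fin 4 → ℝ) : ℝ :=
  (sfun p / p 0) * pd f 0 p

/-- The frame field `∂̄_a = (x^a/t)∂_t + ∂_a`. -/
def Da (a : Fin 3) (f : (Fin 4 → ℝ) → ℝ) (p : Fin 4 → ℝ) : ℝ :=
  (p a.succ / p 0) * pd f 0 p + pd f a.succ p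

/-- The field `L = ∂̄_s + (x^a/s)∂̄_a`. -/
def Lop (f : (Fin 4 → ℝ) → ℝ) (p : Fin 4 → ℝ) : ℝ :=
  Ds f p + ∑ a : Fin 3, (p a.succ / sfun p) * Da a f p

namespace OscAux

def cone : Set (Fin 4 → ℝ) := {q | Real.sqrt (∑ a : Fin 3, (q a.succ) ^ 2) < q 0}

lemma isOpen_cone : IsOpen cone := by
  have h1 : Continuous fun q : Fin 4 → ℝ => Real.sqrt (∑ a : Fin 3, (q a.succ) ^ 2) := by
    fun_prop
  exact isOpen_lt h1 (continuous_apply 0)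

variable {q : Fin 4 → ℝ}

lemma cone_t_pos (hq : q ∈ cone) : 0 < q 0 :=
  lt_of_le_of_lt (Real.sqrt_nonneg _) hq

lemma cone_sub_pos (hq : q ∈ cone) : 0 < q 0 ^ 2 - ∑ a : Fin 3, q a.succ ^ 2 := by
  have h := (Real.sqrt_lt' (cone_t_pos hq)).mp hq
  linarith

lemma sfun_pos (hq : q ∈ cone) : 0 < sfun q := Real.sqrt_pos.mpr (cone_sub_pos hq)

lemma sfun_sq (hq : q ∈ cone) : sfun q ^ 2 = q 0 ^ 2 - ∑ a : Fin 3, q a.succ ^ 2 :=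
  Real.sq_sqrt (le_of_lt (cone_sub_pos hq))

/-- derivative of `sfun` at a cone point -/
def sD (q : Fin 4 → ℝ) : (Fin 4 → ℝ) →L[ℝ] ℝ :=
  (sfun q)⁻¹ • ((q 0) • ContinuousLinearMap.proj 0 -
    ∑ a : Fin 3, (q a.succ) • ContinuousLinearMap.proj (a.succ : Fin 4))

lemma hasFDerivAt_sfun (hq : q ∈ cone) : HasFDerivAt sfun (sD q) q := by
  have h0 : HasFDerivAt (fun q : Fin 4 → ℝ => q 0)
      (ContinuousLinearMap.proj (R := ℝ) (φ := fun _ : Fin 4 => ℝ) 0) q :=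
    hasFDerivAt_apply 0 q
  have hg0 := (h0.fun_mul h0).fun_sub
      (HasFDerivAt.fun_sum (fun (a : Fin 3) (_ : a ∈ Finset.univ) =>
        ((hasFDerivAt_apply (𝕜 := ℝ) (a.succ : Fin 4) q).fun_mul
          (hasFDerivAt_apply (𝕜 := ℝ) (a.succ : Fin 4) q))))
  have hg : HasFDerivAt (fun q : Fin 4 → ℝ => q 0 ^ 2 - ∑ a : Fin 3, q a.succ ^ 2)
      _ q :=
    hg0.congr_of_eventuallyEq (Filter.Eventually.of_forall (fun q => by
      simp [sq]))
  have h2 := hg.sqrt (ne_of_gt (cone_sub_pos hq))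
  have hss : Real.sqrt (q 0 ^ 2 - ∑ a : Fin 3, q a.succ ^ 2) = sfun q := rfl
  refine h2.congr_fderiv ?_
  symm
  ext w
  have hsne := (sfun_pos hq).ne'
  simp only [sD, ContinuousLinearMap.smul_apply, ContinuousLinearMap.sub_apply,
    ContinuousLinearMap.add_apply, ContinuousLinearMap.sum_apply,
    ContinuousLinearMap.proj_apply, smul_eq_mul, hss]
  rw [Finset.sum_add_distrib]
  field_simp
  ring

lemma sD_apply0 (hq : q ∈ cone) : sD q (Pi.single 0 1) = q 0 / sfun q := by
  simp only [sD, ContinuousLinearMap.smul_apply, ContinuousLinearMap.sub_apply,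
    ContinuousLinearMap.sum_apply, ContinuousLinearMap.proj_apply, smul_eq_mul,
    Pi.single_apply, Fin.sum_univ_three]
  norm_num [Fin.ext_iff]
  rw [div_eq_inv_mul]

lemma sD_applyA (hq : q ∈ cone) (a : Fin 3) :
    sD q (Pi.single (a.succ : Fin 4) 1) = -(q a.succ) / sfun q := by
  fin_cases a <;>
  · simp only [sD, ContinuousLinearMap.smul_apply, ContinuousLinearMap.sub_apply,
      ContinuousLinearMap.sum_apply, ContinuousLinearMap.proj_apply, smul_eq_mul,
      Pi.single_apply, Fin.sum_univ_three]
    norm_num [Fin.ext_iff, Fin.val_succ, Pi.single_apply]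
    try ring
    try rfl

lemma pd_eq {f : (Fin 4 → ℝ) → ℝ} {f' : (Fin 4 → ℝ) →L[ℝ] ℝ} {x : Fin 4 → ℝ}
    (h : HasFDerivAt f f' x) (i : Fin 4) : pd f i x = f' (Pi.single i 1) := by
  rw [pd, h.fderiv]

section V
variable {v : (Fin 4 → ℝ) → ℝ}

lemma diff_v (hv : ContDiff ℝ 2 v) : Differentiable ℝ v :=
  hv.differentiable (by norm_num)

lemma diff_fderiv (hv : ContDiff ℝ 2 v) : Differentiable ℝ (fderiv ℝ v) :=
  (hv.fderiv_right (m := 1) (by norm_num)).differentiable (by norm_num)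

lemma hasFDerivAt_pd (hv : ContDiff ℝ 2 v) (j : Fin 4) (x : Fin 4 → ℝ) :
    HasFDerivAt (pd v j)
      ((ContinuousLinearMap.apply ℝ ℝ (Pi.single j 1)).comp (fderiv ℝ (fderiv ℝ v) x)) x := by
  exact ((ContinuousLinearMap.apply ℝ ℝ (Pi.single j (1:ℝ))).hasFDerivAt.comp x
    ((diff_fderiv hv x).hasFDerivAt))

lemma pd_pd (hv : ContDiff ℝ 2 v) (i j : Fin 4) (x : Fin 4 → ℝ) :
    pd (pd v j) i x = fderiv ℝ (fderiv ℝ v) x (Pi.single i 1) (Pi.single j 1) := by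
  rw [pd_eq (hasFDerivAt_pd hv j x)]
  simp

lemma fderiv2_symm (hv : ContDiff ℝ 2 v) (x : Fin 4 → ℝ) (i j : Fin 4) :
    fderiv ℝ (fderiv ℝ v) x (Pi.single i 1) (Pi.single j 1) =
      fderiv ℝ (fderiv ℝ v) x (Pi.single j 1) (Pi.single i 1) :=
  second_derivative_symmetric (fun y => (diff_v hv y).hasFDerivAt)
    ((diff_fderiv hv x).hasFDerivAt) _ _

variable {q : Fin 4 → ℝ}

lemma hasFDerivAt_inv0 (hq : q ∈ cone) :
    HasFDerivAt (fun y : Fin 4 → ℝ => (y 0)⁻¹)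
      ((-((q 0) ^ 2)⁻¹) • ContinuousLinearMap.proj (R := ℝ) (φ := fun _ : Fin 4 => ℝ) 0) q :=
  (hasDerivAt_inv (cone_t_pos hq).ne').comp_hasFDerivAt q (hasFDerivAt_apply (𝕜 := ℝ) 0 q)

lemma hasFDerivAt_st (hq : q ∈ cone) :
    HasFDerivAt (fun y : Fin 4 → ℝ => sfun y / y 0)
      (sfun q • ((-((q 0) ^ 2)⁻¹) • ContinuousLinearMap.proj (R := ℝ) (φ := fun _ : Fin 4 => ℝ) 0) + (q 0)⁻¹ • sD q) q := by
  have h := (hasFDerivAt_sfun hq).mul (hasFDerivAt_inv0 hq)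
  exact h.congr_of_eventuallyEq (Filter.Eventually.of_forall fun y => div_eq_mul_inv _ _)

lemma hasFDerivAt_xt (hq : q ∈ cone) (b : Fin 3) :
    HasFDerivAt (fun y : Fin 4 → ℝ => y b.succ / y 0)
      (q b.succ • ((-((q 0) ^ 2)⁻¹) • ContinuousLinearMap.proj (R := ℝ) (φ := fun _ : Fin 4 => ℝ) 0) +
        (q 0)⁻¹ • ContinuousLinearMap.proj (b.succ : Fin 4)) q := by
  have h := (hasFDerivAt_apply (𝕜 := ℝ) (b.succ : Fin 4) q).mul (hasFDerivAt_inv0 hq)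
  exact h.congr_of_eventuallyEq (Filter.Eventually.of_forall fun y => div_eq_mul_inv _ _)

lemma pdDs (hv : ContDiff ℝ 2 v) (hq : q ∈ cone) (i : Fin 4) :
    pd (Ds v) i q =
      (sfun q * (-((q 0) ^ 2)⁻¹) * (if (0 : Fin 4) = i then (1:ℝ) else 0)
        + (q 0)⁻¹ * sD q (Pi.single i 1)) * pd v 0 q
      + sfun q / q 0 * fderiv ℝ (fderiv ℝ v) q (Pi.single i 1) (Pi.single 0 1) := by
  have h2 := (hasFDerivAt_st hq).fun_mul (hasFDerivAt_pd hv 0 q)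
  have hD : Ds v = fun y => (sfun y / y 0) * pd v 0 y := rfl
  rw [hD, pd_eq h2]
  simp only [ContinuousLinearMap.add_apply, ContinuousLinearMap.smul_apply,
    ContinuousLinearMap.proj_apply, ContinuousLinearMap.comp_apply,
    ContinuousLinearMap.apply_apply, smul_eq_mul, Pi.single_apply]
  ring

lemma pdDa (hv : ContDiff ℝ 2 v) (hq : q ∈ cone) (b : Fin 3) (i : Fin 4) :
    pd (Da b v) i q =
      (q b.succ * (-((q 0) ^ 2)⁻¹) * (if (0 : Fin 4) = i then (1:ℝ) else 0)
        + (q 0)⁻¹ * (if ((b.succ : Fin 4) : Fin 4) = i then (1:ℝ) else 0)) * pd v 0 q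
      + q b.succ / q 0 * fderiv ℝ (fderiv ℝ v) q (Pi.single i 1) (Pi.single 0 1)
      + fderiv ℝ (fderiv ℝ v) q (Pi.single i 1) (Pi.single (b.succ : Fin 4) 1) := by
  have h2 := ((hasFDerivAt_xt hq b).fun_mul (hasFDerivAt_pd hv 0 q)).fun_add
    (hasFDerivAt_pd hv (b.succ : Fin 4) q)
  have hD : Da b v = fun y => (y b.succ / y 0) * pd v 0 y + pd v (b.succ : Fin 4) y := rfl
  rw [hD, pd_eq h2]
  simp only [ContinuousLinearMap.add_apply, ContinuousLinearMap.smul_apply,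
    ContinuousLinearMap.proj_apply, ContinuousLinearMap.comp_apply,
    ContinuousLinearMap.apply_apply, smul_eq_mul, Pi.single_apply]
  ring

/-- The simplified form of `Lop (sfun ^ (3/2) * v)`. -/
def Efun (v : (Fin 4 → ℝ) → ℝ) (y : Fin 4 → ℝ) : ℝ :=
  sfun y ^ ((1:ℝ)/2) *
    ((3/2) * v y + y 0 * pd v 0 y + ∑ a : Fin 3, y a.succ * pd v a.succ y)

lemma pd_g (hv : ContDiff ℝ 2 v) (hq : q ∈ cone) (i : Fin 4) :
    pd (fun y => sfun y ^ ((3:ℝ)/2) * v y) i q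
      = sfun q ^ ((3:ℝ)/2) * pd v i q
        + v q * ((3/2) * sfun q ^ ((1:ℝ)/2) * sD q (Pi.single i 1)) := by
  have h1 := (hasFDerivAt_sfun hq).rpow_const (p := (3:ℝ)/2) (Or.inl (sfun_pos hq).ne')
  have h2 := h1.fun_mul ((diff_v hv q).hasFDerivAt)
  rw [pd_eq h2]
  have he : (3:ℝ)/2 - 1 = 1/2 := by norm_num
  simp only [ContinuousLinearMap.add_apply, ContinuousLinearMap.smul_apply, smul_eq_mul, he]
  rw [pd]

lemma lop_g_eq (hv : ContDiff ℝ 2 v) (hq : q ∈ cone) :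
    Lop (fun y => sfun y ^ ((3:ℝ)/2) * v y) q = Efun v q := by
  have hs := sfun_pos hq
  have ht := cone_t_pos hq
  have hs2 := sfun_sq hq
  rw [Lop, Ds, Efun]
  simp only [Da, pd_g hv hq, sD_apply0 hq, sD_applyA hq, Fin.sum_univ_three]
  rw [Fin.sum_univ_three] at hs2
  have h32 : sfun q ^ ((3:ℝ)/2) = sfun q * sfun q ^ ((1:ℝ)/2) := by
    rw [← Real.rpow_one_add' hs.le (by norm_num : (1:ℝ) + 1/2 ≠ 0)]
    norm_num
  have hu : sfun q ^ ((1:ℝ)/2) * sfun q ^ ((1:ℝ)/2) = sfun q := by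
    rw [← Real.rpow_add hs]
    norm_num
  simp only [h32]
  set u := sfun q ^ ((1:ℝ)/2) with hU
  have hune : u ≠ 0 := by
    have : 0 < u := Real.rpow_pos_of_pos hs _
    exact this.ne'
  rw [← hu] at hs2 ⊢
  simp only [show (Fin.succ (0:Fin 3) : Fin 4) = (1:Fin 4) from rfl,
    show (Fin.succ (1:Fin 3) : Fin 4) = (2:Fin 4) from rfl,
    show (Fin.succ (2:Fin 3) : Fin 4) = (3:Fin 4) from rfl] at hs2 ⊢
  field_simp
  linear_combination (2 * u ^ 4 * pd v 0 q) * hs2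

lemma pd_lopg (hv : ContDiff ℝ 2 v) (hq : q ∈ cone) (i : Fin 4) :
    pd (Lop (fun y => sfun y ^ ((3:ℝ)/2) * v y)) i q = pd (Efun v) i q := by
  have hev : Lop (fun y => sfun y ^ ((3:ℝ)/2) * v y) =ᶠ[nhds q] Efun v :=
    Filter.eventuallyEq_of_mem (isOpen_cone.mem_nhds hq) (fun y hy => lop_g_eq hv hy)
  rw [pd, pd, hev.fderiv_eq]

lemma pd_E (hv : ContDiff ℝ 2 v) (hq : q ∈ cone) (i : Fin 4) :
    pd (Efun v) i q
      = ((1/2) * sfun q ^ ((1:ℝ)/2 - 1) * sD q (Pi.single i 1)) *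
          ((3/2) * v q + q 0 * pd v 0 q + ∑ a : Fin 3, q a.succ * pd v a.succ q)
        + sfun q ^ ((1:ℝ)/2) *
          ((3/2) * pd v i q
            + (q 0 * fderiv ℝ (fderiv ℝ v) q (Pi.single i 1) (Pi.single 0 1)
                + pd v 0 q * (if (0:Fin 4) = i then (1:ℝ) else 0))
            + ∑ a : Fin 3,
                (q a.succ *
                    fderiv ℝ (fderiv ℝ v) q (Pi.single i 1) (Pi.single (a.succ : Fin 4) 1)
                  + pd v a.succ q * (if ((a.succ : Fin 4) : Fin 4) = i then (1:ℝ) else 0)))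
:= by
  have hF : HasFDerivAt
      (fun y : Fin 4 → ℝ => (3/2) * v y + y 0 * pd v 0 y + ∑ a : Fin 3, y a.succ * pd v a.succ y)
      (((3:ℝ)/2) • fderiv ℝ v q
        + ((q 0) • ((ContinuousLinearMap.apply ℝ ℝ (Pi.single 0 1)).comp (fderiv ℝ (fderiv ℝ v) q))
            + (pd v 0 q) • ContinuousLinearMap.proj (R := ℝ) (φ := fun _ : Fin 4 => ℝ) 0)
        + ∑ a : Fin 3,
            ((q a.succ) • ((ContinuousLinearMap.apply ℝ ℝ (Pi.single (a.succ : Fin 4) 1)).comp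
                (fderiv ℝ (fderiv ℝ v) q))
              + (pd v a.succ q) • ContinuousLinearMap.proj (R := ℝ) (φ := fun _ : Fin 4 => ℝ)
                  (a.succ : Fin 4))) q := by
    exact ((((diff_v hv) q).hasFDerivAt.const_mul ((3:ℝ)/2)).fun_add
      ((hasFDerivAt_apply (𝕜 := ℝ) 0 q).fun_mul (hasFDerivAt_pd hv 0 q))).fun_add
      (HasFDerivAt.fun_sum (fun a (_ : a ∈ Finset.univ) =>
        (hasFDerivAt_apply (𝕜 := ℝ) (a.succ : Fin 4) q).fun_mul (hasFDerivAt_pd hv (a.succ : Fin 4) q)))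
  have h1 := (hasFDerivAt_sfun hq).rpow_const (p := (1:ℝ)/2) (Or.inl (sfun_pos hq).ne')
  have h2 := h1.fun_mul hF
  have hEe : Efun v = fun y => sfun y ^ ((1:ℝ)/2) *
      ((3/2) * v y + y 0 * pd v 0 y + ∑ a : Fin 3, y a.succ * pd v a.succ y) := rfl
  rw [hEe, pd_eq h2]
  simp only [ContinuousLinearMap.add_apply, ContinuousLinearMap.smul_apply,
    ContinuousLinearMap.sum_apply, ContinuousLinearMap.proj_apply,
    ContinuousLinearMap.comp_apply, ContinuousLinearMap.apply_apply, smul_eq_mul,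
    Pi.single_apply, pd]
  ring

end V

end OscAux

set_option maxHeartbeats 4000000 in
open OscAux in
/-- pointwise identity in the cone `{r < t}`:
`∂̄_s∂̄_s v + (2x^a/s)∂̄_s∂̄_a v + (3/s)∂̄_s v
  = s^{-3/2} L²(s^{3/2}v) − (x^ax^b/s²)∂̄_a∂̄_b v − (3x^a/s²)∂̄_a v − (3/(4s²))v`. -/
theorem oscillator_reduction_identity
    (v : (Fin 4 → ℝ) → ℝ) (hv : ContDiff ℝ 2 v)
    (p : Fin 4 → ℝ)
    (hp : Real.sqrt (∑ a : Fin 3, (p a.succ) ^ 2) < p 0) :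
    Ds (Ds v) p + (∑ a : Fin 3, (2 * p a.succ / sfun p) * Ds (Da a v) p) +
        (3 / sfun p) * Ds v p =
      (sfun p) ^ (-(3 : ℝ) / 2) *
          Lop (Lop (fun q => (sfun q) ^ ((3 : ℝ) / 2) * v q)) p -
        (∑ a : Fin 3, ∑ b : Fin 3,
          (p a.succ * p b.succ / (sfun p) ^ 2) * Da a (Da b v) p) -
        (∑ a : Fin 3, (3 * p a.succ / (sfun p) ^ 2) * Da a v p) -
        (3 / (4 * (sfun p) ^ 2)) * v p := by
  have hq : p ∈ OscAux.cone := hp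
  have hs := sfun_pos hq
  have ht := cone_t_pos hq
  have hs2 := sfun_sq hq
  rw [Fin.sum_univ_three] at hs2
  simp only [show (Fin.succ (0:Fin 3) : Fin 4) = (1:Fin 4) from rfl,
    show (Fin.succ (1:Fin 3) : Fin 4) = (2:Fin 4) from rfl,
    show (Fin.succ (2:Fin 3) : Fin 4) = (3:Fin 4) from rfl] at hs2
  have hsym : ∀ i j : Fin 4, fderiv ℝ (fderiv ℝ v) p (Pi.single i 1) (Pi.single j 1)
      = fderiv ℝ (fderiv ℝ v) p (Pi.single j 1) (Pi.single i 1) := fderiv2_symm hv p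
  simp only [Lop, Ds, Da, Fin.sum_univ_three]
  rw [show ((3:ℝ)/2) = ((3:ℝ)/2) from rfl]
  simp only [pd_lopg hv hq, pd_E hv hq, pdDs hv hq, pdDa hv hq,
    sD_apply0 hq, sD_applyA hq, Fin.sum_univ_three]
  simp only [show (Fin.succ (0:Fin 3) : Fin 4) = (1:Fin 4) from rfl,
    show (Fin.succ (1:Fin 3) : Fin 4) = (2:Fin 4) from rfl,
    show (Fin.succ (2:Fin 3) : Fin 4) = (3:Fin 4) from rfl]
  norm_num [Fin.ext_iff, show ((3:Fin 4):ℕ) = 3 from rfl, show ((2:Fin 4):ℕ) = 2 from rfl,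
    show ((1:Fin 4):ℕ) = 1 from rfl, show ((0:Fin 4):ℕ) = 0 from rfl]
  have hu : sfun p ^ ((1:ℝ)/2) * sfun p ^ ((1:ℝ)/2) = sfun p := by
    rw [← Real.rpow_add hs]; norm_num
  have hA : sfun p ^ (-(1/2) : ℝ) = (sfun p ^ ((1:ℝ)/2))⁻¹ := by
    rw [show (-(1/2) : ℝ) = -((1:ℝ)/2) by norm_num, Real.rpow_neg hs.le]
  have hC : sfun p ^ (-(3/2) : ℝ) = (sfun p * sfun p ^ ((1:ℝ)/2))⁻¹ := by
    rw [show (-(3/2) : ℝ) = -((3:ℝ)/2) by norm_num, Real.rpow_neg hs.le,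
      show ((3:ℝ)/2) = 1 + (1:ℝ)/2 by norm_num, Real.rpow_add hs, Real.rpow_one]
  have hB : sfun p ^ ((1/2) : ℝ) = sfun p ^ ((1:ℝ)/2) := by norm_num
  rw [hA, hC, hB]
  rw [hsym 1 0, hsym 2 0, hsym 3 0, hsym 2 1, hsym 3 1, hsym 3 2]
  set u := sfun p ^ ((1:ℝ)/2) with hU
  have hune : u ≠ 0 := (Real.rpow_pos_of_pos hs _).ne'
  set s := sfun p with hS
  field_simp
  linear_combination (-16 * s ^ 5 * pd v 0 p + 24 * s ^ 3 * p 0 ^ 2 * pd v 0 p + 16 * s ^ 5 * p 0 * ((fderiv ℝ (fderiv ℝ v) p) (Pi.single 0 1)) (Pi.single 0 1) + -32 * s ^ 3 * p 1 ^ 2 * pd v 0 p + 32 * s ^ 3 * p 0 * p 1 ^ 2 * ((fderiv ℝ (fderiv ℝ v) p) (Pi.single 0 1)) (Pi.single 0 1) + 16 * s ^ 3 * p 0 ^ 2 * p 1 * ((fderiv ℝ (fderiv ℝ v) p) (Pi.single 0 1)) (Pi.single 1 1) + -32 * s ^ 3 * p 2 ^ 2 * pd v 0 p + 32 * s ^ 3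 * p 0 * p 2 ^ 2 * ((fderiv ℝ (fderiv ℝ v) p) (Pi.single 0 1)) (Pi.single 0 1) + 16 * s ^ 3 * p 0 ^ 2 * p 2 * ((fderiv ℝ (fderiv ℝ v) p) (Pi.single 0 1)) (Pi.single 2 1) + -32 * s ^ 3 * p 3 ^ 2 * pd v 0 p + 32 * s ^ 3 * p 0 * p 3 ^ 2 * ((fderiv ℝ (fderiv ℝ v) p) (Pi.single 0 1)) (Pi.single 0 1) + 16 * s ^ 3 * p 0 ^ 2 * p 3 * ((fderiv ℝ (fderiv ℝ v) p) (Pi.single 0 1)) (Pi.single 3 1) + -16 * s ^ 3 * p 0 ^ 3 * ((fderiv ℝ (fderiv ℝ v) p) (Pi.single 0 1)) (Pi.single 0 1) + 24 * s * p 0 ^ 2 * p 1 ^ 2 * pd v 0 p + -16 * s * p 0 ^ 3 * p 1 ^ 2 * ((fderiv ℝ (fderiv ℝ v) p) (Pi.single 0 1)) (Pi.single 0 1) + 16 * s * p 0 ^ 2 * p 1 ^ 3 * ((fderiv ℝ (fderiv ℝ v) p) (Pi.single 0 1)) (Pi.single 1 1) + 16 * s * p 0 ^ 2 * p 1 ^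 2 * p 2 * ((fderiv ℝ (fderiv ℝ v) p) (Pi.single 0 1)) (Pi.single 2 1) + 16 * s * p 0 ^ 2 * p 1 ^ 2 * p 3 * ((fderiv ℝ (fderiv ℝ v) p) (Pi.single 0 1)) (Pi.single 3 1) + 8 * s * p 0 ^ 3 * p 1 * pd v 1 p + -16 * s * p 0 ^ 4 * p 1 * ((fderiv ℝ (fderiv ℝ v) p) (Pi.single 0 1)) (Pi.single 1 1) + 24 * s * p 0 ^ 2 * p 2 ^ 2 * pd v 0 p + -16 * s * p 0 ^ 3 * p 2 ^ 2 * ((fderiv ℝ (fderiv ℝ v) p) (Pi.single 0 1)) (Pi.single 0 1) + 16 * s * p 0 ^ 2 * p 1 * p 2 ^ 2 * ((fderiv ℝ (fderiv ℝ v) p) (Pi.single 0 1)) (Pi.single 1 1) + 16 * s * p 0 ^ 2 * p 2 ^ 3 * ((fderiv ℝ (fderiv ℝ v) p) (Pi.single 0 1)) (Pi.single 2 1) + 16 * s * p 0 ^ 2 * p 2 ^ 2 * p 3 * ((fderiv ℝ (fderiv ℝ v) p) (Pi.single 0 1)) (Pi.single 3 1) + 8 * s * p 0 ^ 3 * p 2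 * pd v 2 p + -16 * s * p 0 ^ 4 * p 2 * ((fderiv ℝ (fderiv ℝ v) p) (Pi.single 0 1)) (Pi.single 2 1) + 24 * s * p 0 ^ 2 * p 3 ^ 2 * pd v 0 p + -16 * s * p 0 ^ 3 * p 3 ^ 2 * ((fderiv ℝ (fderiv ℝ v) p) (Pi.single 0 1)) (Pi.single 0 1) + 16 * s * p 0 ^ 2 * p 1 * p 3 ^ 2 * ((fderiv ℝ (fderiv ℝ v) p) (Pi.single 0 1)) (Pi.single 1 1) + 16 * s * p 0 ^ 2 * p 2 * p 3 ^ 2 * ((fderiv ℝ (fderiv ℝ v) p) (Pi.single 0 1)) (Pi.single 2 1) + 16 * s * p 0 ^ 2 * p 3 ^ 3 * ((fderiv ℝ (fderiv ℝ v) p) (Pi.single 0 1)) (Pi.single 3 1) + 8 * s * p 0 ^ 3 * p 3 * pd v 3 p + -16 * s * p 0 ^ 4 * p 3 * ((fderiv ℝ (fderiv ℝ v) p) (Pi.single 0 1)) (Pi.single 3 1) + -16 * s * p 1 ^ 4 * pd v 0 p + 16 * s * p 0 * p 1 ^ 4 * ((fderiv ℝ (fderiv ℝ v) p) (Pi.single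 0 1)) (Pi.single 0 1) + -32 * s * p 1 ^ 2 * p 2 ^ 2 * pd v 0 p + 32 * s * p 0 * p 1 ^ 2 * p 2 ^ 2 * ((fderiv ℝ (fderiv ℝ v) p) (Pi.single 0 1)) (Pi.single 0 1) + -32 * s * p 1 ^ 2 * p 3 ^ 2 * pd v 0 p + 32 * s * p 0 * p 1 ^ 2 * p 3 ^ 2 * ((fderiv ℝ (fderiv ℝ v) p) (Pi.single 0 1)) (Pi.single 0 1) + -16 * s * p 2 ^ 4 * pd v 0 p + 16 * s * p 0 * p 2 ^ 4 * ((fderiv ℝ (fderiv ℝ v) p) (Pi.single 0 1)) (Pi.single 0 1) + -32 * s * p 2 ^ 2 * p 3 ^ 2 * pd v 0 p + 32 * s * p 0 * p 2 ^ 2 * p 3 ^ 2 * ((fderiv ℝ (fderiv ℝ v) p) (Pi.single 0 1)) (Pi.single 0 1) + -16 * s * p 3 ^ 4 * pd v 0 p + 16 * s * p 0 * p 3 ^ 4 * ((fderiv ℝ (fderiv ℝ v) p) (Pi.single 0 1)) (Pi.single 0 1) + 12 * s * p 0 ^ 3 * v p) * hu + (-16 * s ^ 4 * pd v 0 p + 8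 * s ^ 2 * p 0 ^ 2 * pd v 0 p + 16 * s ^ 4 * p 0 * ((fderiv ℝ (fderiv ℝ v) p) (Pi.single 0 1)) (Pi.single 0 1) + -16 * s ^ 2 * p 1 ^ 2 * pd v 0 p + 16 * s ^ 2 * p 0 * p 1 ^ 2 * ((fderiv ℝ (fderiv ℝ v) p) (Pi.single 0 1)) (Pi.single 0 1) + 16 * s ^ 2 * p 0 ^ 2 * p 1 * ((fderiv ℝ (fderiv ℝ v) p) (Pi.single 0 1)) (Pi.single 1 1) + -16 * s ^ 2 * p 2 ^ 2 * pd v 0 p + 16 * s ^ 2 * p 0 * p 2 ^ 2 * ((fderiv ℝ (fderiv ℝ v) p) (Pi.single 0 1)) (Pi.single 0 1) + 16 * s ^ 2 * p 0 ^ 2 * p 2 * ((fderiv ℝ (fderiv ℝ v) p) (Pi.single 0 1)) (Pi.single 2 1) + -16 * s ^ 2 * p 3 ^ 2 * pd v 0 p + 16 * s ^ 2 * p 0 * p 3 ^ 2 * ((fderiv ℝ (fderiv ℝ v) p) (Pi.single 0 1)) (Pi.single 0 1) + 16 * s ^ 2 * p 0 ^ 2 * p 3 * ((fderiv ℝ (fderiv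 ℝ v) p) (Pi.single 0 1)) (Pi.single 3 1)) * hs2
end
end

section
/- Let J = ∂_t + (2t x^a/(t²+r²)) ∂_a be the vector field on {0 < r < t} ⊂ ℝ^{1+3}, and let γ(·; t₀, x₀) be its integral curve through (t₀,x₀) with r₀ = |x₀| > 0 and c₀ = (t₀² − r₀²)/r₀ > 0. Then the integral curve is given explicitly by γ⁰(τ) = τ, γ^a(τ) = (x₀^a/r₀)(√(τ² + c₀²/4) − c₀/2); equivalently, the quantity (t² − r²)/r is constant equal to c₀ along γ. -/
/-- explicit integral curves of `J = ∂_t + (2tx^a/(t²+r²))∂_a`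
in `{0 < r < t} ⊂ ℝ^{1+3}`: the curve
`γ(τ) = ((√(τ²+c₀²/4) − c₀/2)/r₀) • x₀` passes through `(t₀,x₀)`, satisfies
`γ' = (2τ/(τ²+|γ|²)) γ`, and `(τ² − |γ|²)/|γ| ≡ c₀`. -/
theorem J_integral_curve_explicit
    (t₀ : ℝ) (x₀ : EuclideanSpace ℝ (Fin 3))
    (h0 : 0 < ‖x₀‖) (ht : ‖x₀‖ < t₀)
    (c₀ : ℝ) (hc : c₀ = (t₀ ^ 2 - ‖x₀‖ ^ 2) / ‖x₀‖)
    (γ : ℝ → EuclideanSpace ℝ (Fin 3))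
    (hγ : γ = fun τ =>
      ((Real.sqrt (τ ^ 2 + c₀ ^ 2 / 4) - c₀ / 2) / ‖x₀‖) • x₀) :
    γ t₀ = x₀ ∧
      ∀ τ : ℝ, 0 < τ →
        HasDerivAt γ ((2 * τ / (τ ^ 2 + ‖γ τ‖ ^ 2)) • γ τ) τ ∧
        (τ ^ 2 - ‖γ τ‖ ^ 2) / ‖γ τ‖ = c₀ := by
  set r₀ := ‖x₀‖ with hr₀
  have hr₀ne : r₀ ≠ 0 := ne_of_gt h0
  have ht₀ : 0 < t₀ := lt_trans h0 ht
  have hc0 : 0 < c₀ := by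
    rw [hc]
    apply div_pos _ h0
    nlinarith
  constructor
  · -- γ t₀ = x₀
    have hs : Real.sqrt (t₀ ^ 2 + c₀ ^ 2 / 4) = r₀ + c₀ / 2 := by
      rw [show t₀ ^ 2 + c₀ ^ 2 / 4 = (r₀ + c₀ / 2) ^ 2 by
        have : c₀ * r₀ = t₀ ^ 2 - r₀ ^ 2 := by
          rw [hc]; field_simp
        ring_nf
        nlinarith]
      exact Real.sqrt_sq (by positivity)
    rw [hγ]
    simp only [hs]
    rw [show r₀ + c₀ / 2 - c₀ / 2 = r₀ by ring, div_self hr₀ne, one_smul]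
  · intro τ hτ
    set q := Real.sqrt (τ ^ 2 + c₀ ^ 2 / 4) with hqdef
    have hq2 : q ^ 2 = τ ^ 2 + c₀ ^ 2 / 4 := Real.sq_sqrt (by positivity)
    have hqpos : 0 < q := Real.sqrt_pos.mpr (by positivity)
    have hsgt : c₀ / 2 < q := by nlinarith
    set s := q - c₀ / 2 with hsdef
    have hspos : 0 < s := by simp [hsdef]; linarith
    have hnorm : ‖γ τ‖ = s := by
      rw [hγ]
      simp only [norm_smul, Real.norm_eq_abs]
      rw [abs_of_pos (by positivity : (0:ℝ) < s / r₀)]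
      field_simp
      exact hr₀.symm
    have hkey : τ ^ 2 + s ^ 2 = 2 * q * s := by rw [hsdef]; nlinarith [hq2]
    constructor
    · -- derivative
      have hd1 : HasDerivAt (fun τ : ℝ => τ ^ 2 + c₀ ^ 2 / 4) (2 * τ) τ := by
        simpa using ((hasDerivAt_pow 2 τ).add_const (c₀ ^ 2 / 4))
      have hd2 : HasDerivAt (fun τ : ℝ => Real.sqrt (τ ^ 2 + c₀ ^ 2 / 4))
          (τ / q) τ := by
        have := (Real.hasDerivAt_sqrt (by positivity : τ ^ 2 + c₀ ^ 2 / 4 ≠ 0)).comp τ hd1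
        refine this.congr_deriv ?_
        rw [← hqdef]
        field_simp
      have hd3 : HasDerivAt (fun τ : ℝ =>
          ((Real.sqrt (τ ^ 2 + c₀ ^ 2 / 4) - c₀ / 2) / r₀) • x₀)
          ((τ / q / r₀) • x₀) τ :=
        (((hd2.sub_const (c₀ / 2)).div_const r₀).smul_const x₀)
      have hγτ : γ τ = (s / r₀) • x₀ := by rw [hγ]
      rw [hnorm, hγτ, smul_smul, hγ]
      convert hd3 using 2
      rw [hkey]
      field_simp
    · -- invariant
      rw [hnorm]
      have : τ ^ 2 - s ^ 2 = c₀ * s := by rw [hsdef]; nlinarith [hq2]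
      rw [this, mul_div_assoc, div_self (ne_of_gt hspos), mul_one]
end

section
/- Along the integral curve γ(·;t,x) of J = ∂_t + (2τ x^a/(τ²+r²))∂_a with conserved quantity c₀ = (t²−r²)/r, the coefficient function P(τ, r) := (2/τ)·(τ²−r²)/(τ²+r²) evaluated along γ satisfies 0 ≤ P_{t,x}(τ) ≤ C c₀ (1+τ)^{-2} for all τ ≥ t ≥ 1, for a universal constant C; consequently ∫_t^∞ P_{t,x}(η) dη ≤ C c₀ t^{-1} < ∞, and exp(∫_t^T P_{t,x}(η)dη) ≤ exp(C c₀ (t^{-1} − T^{-1})) for T ≥ t. -/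
open Set MeasureTheory

/-- along an integral curve of `J` with conserved quantity
`c₀ = (τ²−r²)/r`, the coefficient `P(τ,r) = (2/τ)(τ²−r²)/(τ²+r²)` satisfies
`0 ≤ P ≤ C c₀ (1+τ)⁻²`, hence `∫_t^∞ P ≤ C c₀/t` and
`exp(∫_t^T P) ≤ exp(C c₀ (t⁻¹ − T⁻¹))`, for a universal constant `C`. -/
theorem P_coefficient_bounds :
    ∃ C : ℝ, 0 < C ∧
      ∀ (c₀ t : ℝ) (rr : ℝ → ℝ), 0 < c₀ → 1 ≤ t →
        ContinuousOn rr (Ici t) →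
        (∀ τ ∈ Ici t, 0 < rr τ ∧ rr τ < τ ∧ (τ ^ 2 - rr τ ^ 2) / rr τ = c₀) →
        (∀ τ ∈ Ici t,
            0 ≤ (2 / τ) * (τ ^ 2 - rr τ ^ 2) / (τ ^ 2 + rr τ ^ 2) ∧
            (2 / τ) * (τ ^ 2 - rr τ ^ 2) / (τ ^ 2 + rr τ ^ 2) ≤
              C * c₀ / (1 + τ) ^ 2) ∧
        (∫ η in Ici t, (2 / η) * (η ^ 2 - rr η ^ 2) / (η ^ 2 + rr η ^ 2)) ≤
          C * c₀ / t ∧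
        ∀ T, t ≤ T →
          Real.exp (∫ η in t..T,
              (2 / η) * (η ^ 2 - rr η ^ 2) / (η ^ 2 + rr η ^ 2)) ≤
            Real.exp (C * c₀ * (t⁻¹ - T⁻¹)) := by
  refine ⟨4, by norm_num, ?_⟩
  intro c₀ t rr hc₀ ht hcont hrr
  have ht0 : (0 : ℝ) < t := lt_of_lt_of_le one_pos ht
  set P : ℝ → ℝ := fun η => (2 / η) * (η ^ 2 - rr η ^ 2) / (η ^ 2 + rr η ^ 2) with hP
  -- basic facts at each point
  have hfacts : ∀ τ ∈ Ici t, 0 < τ ∧ 0 < τ ^ 2 + rr τ ^ 2 ∧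
      τ ^ 2 - rr τ ^ 2 = c₀ * rr τ := by
    intro τ hτ
    obtain ⟨hr0, hrτ, hc⟩ := hrr τ hτ
    have hτ0 : 0 < τ := lt_of_lt_of_le ht0 hτ
    refine ⟨hτ0, by positivity, ?_⟩
    field_simp at hc
    linarith
  -- pointwise bound with c₀/τ²
  have key : ∀ τ ∈ Ici t, 0 ≤ P τ ∧ P τ ≤ c₀ / τ ^ 2 := by
    intro τ hτ
    obtain ⟨hr0, hrτ, _⟩ := hrr τ hτ
    obtain ⟨hτ0, hA, hcr⟩ := hfacts τ hτ
    have hnum : 0 ≤ τ ^ 2 - rr τ ^ 2 := by nlinarith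
    constructor
    · exact div_nonneg (mul_nonneg (by positivity) hnum) hA.le
    · rw [hP]
      simp only
      rw [hcr, div_le_div_iff₀ hA (by positivity)]
      have h1 : 2 / τ * (c₀ * rr τ) * τ ^ 2 = 2 * c₀ * rr τ * τ := by
        field_simp
      rw [h1]
      nlinarith [mul_nonneg hc₀.le (sq_nonneg (τ - rr τ))]
  -- first conclusion
  have hone : ∀ τ ∈ Ici t, 0 ≤ P τ ∧ P τ ≤ 4 * c₀ / (1 + τ) ^ 2 := by
    intro τ hτ
    obtain ⟨h0, h1⟩ := key τ hτ
    have hτ1 : 1 ≤ τ := le_trans ht hτ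
    have hτ0 : 0 < τ := lt_of_lt_of_le one_pos hτ1
    refine ⟨h0, h1.trans ?_⟩
    rw [div_le_div_iff₀ (by positivity) (by positivity)]
    nlinarith [mul_nonneg hc₀.le (mul_nonneg (by linarith : (0:ℝ) ≤ 3 * τ + 1)
      (by linarith : (0:ℝ) ≤ τ - 1))]
  -- continuity of P on Ici t
  have hPcont : ContinuousOn P (Ici t) := by
    apply ContinuousOn.div
    · apply ContinuousOn.mul
      · exact continuousOn_const.div continuousOn_id
          (fun x hx => (hfacts x hx).1.ne')
      · exact (continuousOn_pow 2).sub (hcont.pow 2)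
    · exact (continuousOn_pow 2).add (hcont.pow 2)
    · exact fun x hx => (hfacts x hx).2.1.ne'
  -- the dominating function
  set g : ℝ → ℝ := fun η => c₀ * η ^ (-2 : ℝ) with hg
  have hgP : ∀ τ ∈ Ici t, P τ ≤ g τ := by
    intro τ hτ
    have hτ0 : 0 < τ := lt_of_lt_of_le ht0 hτ
    have : τ ^ (-2 : ℝ) = (τ ^ 2)⁻¹ := by
      rw [Real.rpow_neg hτ0.le, Real.rpow_two]
    rw [hg]; simp only [this]
    rw [← div_eq_mul_inv]
    exact (key τ hτ).2
  have hgint : IntegrableOn g (Ioi t) := by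
    exact (integrableOn_Ioi_rpow_of_lt (by norm_num) ht0).const_mul c₀
  have hgval : ∫ η in Ioi t, g η = c₀ / t := by
    rw [hg]
    rw [MeasureTheory.integral_const_mul,
      integral_Ioi_rpow_of_lt (by norm_num) ht0]
    rw [show (-2 : ℝ) + 1 = -1 by norm_num]
    rw [Real.rpow_neg_one]
    field_simp
  -- integrability of P on Ici t
  have hPmeas : AEStronglyMeasurable P (volume.restrict (Ici t)) :=
    hPcont.aestronglyMeasurable measurableSet_Ici
  have hPint : IntegrableOn P (Ici t) := by
    apply Integrable.mono' (Iff.mpr integrableOn_Ici_iff_integrableOn_Ioi hgint) hPmeas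
    filter_upwards [MeasureTheory.ae_restrict_mem measurableSet_Ici] with τ hτ
    rw [Real.norm_eq_abs, abs_of_nonneg (hone τ hτ).1]
    exact hgP τ hτ
  -- bound on the improper integral
  have hIci : (∫ η in Ici t, P η) ≤ 4 * c₀ / t := by
    have h1 : (∫ η in Ici t, P η) ≤ c₀ / t := by
      rw [integral_Ici_eq_integral_Ioi, ← hgval]
      apply MeasureTheory.setIntegral_mono_on
        (hPint.mono Ioi_subset_Ici_self le_rfl) hgint measurableSet_Ioi
      exact fun x hx => hgP x (Ioi_subset_Ici_self hx)
    refine h1.trans ?_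
    gcongr
    linarith
  refine ⟨hone, hIci, ?_⟩
  -- interval integral bound
  intro T hT
  rw [Real.exp_le_exp]
  have hsub : uIcc t T ⊆ Ici t := by
    rw [uIcc_of_le hT]; exact Icc_subset_Ici_self
  have hPii : IntervalIntegrable P volume t T :=
    (hPcont.mono hsub).intervalIntegrable
  have hgii : IntervalIntegrable g volume t T := by
    apply ContinuousOn.intervalIntegrable
    apply continuousOn_const.mul
    apply ContinuousOn.rpow_const continuousOn_id
    intro x hx
    left
    have := hsub hx
    exact (lt_of_lt_of_le ht0 this).ne'
  have hmono : (∫ η in t..T, P η) ≤ ∫ η in t..T, g η := by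
    apply intervalIntegral.integral_mono_on hT hPii hgii
    intro x hx
    exact hgP x (Icc_subset_Ici_self hx)
  have hgeval : (∫ η in t..T, g η) = c₀ * (t⁻¹ - T⁻¹) := by
    rw [hg]
    rw [intervalIntegral.integral_const_mul]
    have hrw : ∀ x ∈ uIcc t T, x ^ (-2 : ℝ) = x ^ (-2 : ℤ) := by
      intro x hx
      have hx0 : 0 < x := lt_of_lt_of_le ht0 (hsub hx)
      rw [show ((-2 : ℝ)) = ((-2 : ℤ) : ℝ) by norm_num, Real.rpow_intCast]
    rw [intervalIntegral.integral_congr hrw]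
    rw [integral_zpow]
    · norm_num
      left
      ring
    · right
      constructor
      · norm_num
      · rw [uIcc_of_le hT]
        intro h
        exact absurd h.1 (not_le.mpr ht0)
  calc (∫ η in t..T, P η) ≤ c₀ * (t⁻¹ - T⁻¹) := hgeval ▸ hmono
    _ ≤ 4 * c₀ * (t⁻¹ - T⁻¹) := by
        apply mul_le_mul_of_nonneg_right (by linarith)
        have : T⁻¹ ≤ t⁻¹ := inv_anti₀ ht0 hT
        linarith
end
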